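/- Let 𝒢 = (G_n,‖·‖_n)_{n∈ℕ} be a family of metric groups with sup_n sup_{g∈G_n} ‖g‖_n < ∞, and 𝒰 a nonprincipal ultrafilter on ℕ. Suppose X ⊆ 𝒢*_met is a metrically internal subset. If X generates 𝒢*_met as a group, then X generates in finitely many steps: there is N ∈ ℕ such that 𝒢*_met = (X ∪ X⁻¹)^N, i.e., every element of 𝒢*_met is a product of N elements of X ∪ X⁻¹. -/

import Mathlib

open Filter Set Pointwise ENNReal

/-- `CN N g` : the set of all products of at most `N` conjugates of `g` and `g⁻¹`. -/
def CN {H : Type*} [Group H] (N : ℕ) (g : H) : Set H :=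
  ⋃ m ≤ N, ({x | IsConj g x} ∪ {x | IsConj g⁻¹ x}) ^ m

/-- A family of groups equipped with conjugation-invariant pseudo-norms with values in `[0,∞]`. -/
structure PMFamily where
  G : ℕ → Type
  grp : ∀ n, Group (G n)
  ν : ∀ n, G n → ℝ≥0∞
  norm_one : ∀ n, ν n 1 = 0
  norm_mul : ∀ n (g h : G n), ν n (g * h) ≤ ν n g + ν n h
  norm_inv : ∀ n (g : G n), ν n g⁻¹ = ν n g
  norm_conj : ∀ n (g h : G n), ν n (h * g * h⁻¹) = ν n g

attribute [instance] PMFamily.grp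

namespace PMFamily

variable (𝒢 : PMFamily) (U : Ultrafilter ℕ)

/-- The subgroup of infinitesimal sequences. -/
def E : Subgroup (∀ n, 𝒢.G n) where
  carrier := {g | ∀ ε : ℝ≥0∞, 0 < ε → {n | 𝒢.ν n (g n) < ε} ∈ U}
  one_mem' := by
    intro ε hε
    have h : {n | 𝒢.ν n ((1 : ∀ n, 𝒢.G n) n) < ε} = Set.univ := by
      ext n; simpa [𝒢.norm_one n] using hε
    show {n | 𝒢.ν n ((1 : ∀ n, 𝒢.G n) n) < ε} ∈ U
    rw [h]
    exact Filter.univ_mem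
  mul_mem' := by
    intro g h hg hh ε hε
    have h2 : (0 : ℝ≥0∞) < ε / 2 := ENNReal.half_pos hε.ne'
    have key : {n | 𝒢.ν n (g n) < ε / 2} ∩ {n | 𝒢.ν n (h n) < ε / 2} ⊆
        {n | 𝒢.ν n ((g * h) n) < ε} := by
      rintro n ⟨h1, h1'⟩
      simp only [Set.mem_setOf_eq] at h1 h1' ⊢
      calc 𝒢.ν n ((g * h) n) = 𝒢.ν n (g n * h n) := rfl
        _ ≤ 𝒢.ν n (g n) + 𝒢.ν n (h n) := 𝒢.norm_mul n _ _
        _ < ε / 2 + ε / 2 := ENNReal.add_lt_add h1 h1'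
        _ = ε := ENNReal.add_halves ε
    exact Filter.mem_of_superset (Filter.inter_mem (hg _ h2) (hh _ h2)) key
  inv_mem' := by
    intro g hg ε hε
    have h : {n | 𝒢.ν n (g⁻¹ n) < ε} = {n | 𝒢.ν n (g n) < ε} := by
      ext n; simp only [Set.mem_setOf_eq, Pi.inv_apply, 𝒢.norm_inv n]
    show {n | 𝒢.ν n (g⁻¹ n) < ε} ∈ U
    rw [h]
    exact hg ε hε

theorem mem_E {g : ∀ n, 𝒢.G n} :
    g ∈ 𝒢.E U ↔ ∀ ε : ℝ≥0∞, 0 < ε → {n | 𝒢.ν n (g n) < ε} ∈ U := Iff.rfl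

instance normal_E : (𝒢.E U).Normal := by
  constructor
  intro g hg h
  rw [mem_E] at hg ⊢
  intro ε hε
  have heq : {n | 𝒢.ν n ((h * g * h⁻¹) n) < ε} = {n | 𝒢.ν n (g n) < ε} := by
    ext n
    simp only [Set.mem_setOf_eq, Pi.mul_apply, Pi.inv_apply, 𝒢.norm_conj n]
  rw [heq]
  exact hg ε hε

/-- The metric ultraproduct. -/
abbrev Q := (∀ n, 𝒢.G n) ⧸ 𝒢.E U

/-- The limit of the norms along the ultrafilter, on the product group. -/
noncomputable def pnorm (g : ∀ n, 𝒢.G n) : ℝ≥0∞ :=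
  Filter.limsup (fun n => 𝒢.ν n (g n)) U

/-- The induced norm on the metric ultraproduct. -/
noncomputable def qnorm (x : 𝒢.Q U) : ℝ≥0∞ := 𝒢.pnorm U (Quotient.out x)

/-- The open ball of radius `ε` around the identity in the metric ultraproduct. -/
def ball (ε : ℝ≥0∞) : Set (𝒢.Q U) := {x | 𝒢.qnorm U x < ε}

/-- Metrically internal subsets of the metric ultraproduct. -/
def internalSet (Xn : ∀ n, Set (𝒢.G n)) : Set (𝒢.Q U) :=
  (QuotientGroup.mk : (∀ n, 𝒢.G n) → 𝒢.Q U) '' {g | ∀ n, g n ∈ Xn n}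

/-- The finitary subgroup of the metric ultraproduct: classes of uniformly bounded
sequences (equivalently, elements of finite norm). -/
def finSubgroup : Subgroup (𝒢.Q U) where
  carrier := {x | ∃ g : ∀ n, 𝒢.G n, QuotientGroup.mk g = x ∧
    ∃ C : ℝ≥0∞, C ≠ ⊤ ∧ ∀ n, 𝒢.ν n (g n) ≤ C}
  one_mem' := ⟨1, rfl, 0, by simp, fun n => by simp [𝒢.norm_one n]⟩
  mul_mem' := by
    rintro x y ⟨g, rfl, C, hC, hg⟩ ⟨h, rfl, D, hD, hh⟩
    refine ⟨g * h, rfl, C + D, ENNReal.add_ne_top.mpr ⟨hC, hD⟩, fun n => ?_⟩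
    exact le_trans (𝒢.norm_mul n (g n) (h n)) (add_le_add (hg n) (hh n))
  inv_mem' := by
    rintro x ⟨g, rfl, C, hC, hg⟩
    exact ⟨g⁻¹, rfl, C, hC, fun n => by rw [Pi.inv_apply, 𝒢.norm_inv n]; exact hg n⟩

end PMFamily

namespace Statement4Aux

open Filter Set Pointwise ENNReal PMFamily

variable (𝒢 : PMFamily) (U : Ultrafilter ℕ)

/-- cyclic invariance of the norm -/
lemma nu_mul_comm (n : ℕ) (a b : 𝒢.G n) : 𝒢.ν n (a * b) = 𝒢.ν n (b * a) := by
  have := 𝒢.norm_conj n (a * b) b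
  have hb : b * (a * b) * b⁻¹ = b * a := by group
  rw [hb] at this
  exact this.symm

lemma mk_eq_iff (g h : ∀ n, 𝒢.G n) :
    (QuotientGroup.mk g : 𝒢.Q U) = QuotientGroup.mk h ↔
      ∀ ε : ℝ≥0∞, 0 < ε → {n | 𝒢.ν n ((g n)⁻¹ * h n) < ε} ∈ U := by
  rw [QuotientGroup.eq]
  exact 𝒢.mem_E U

lemma mk_eq_of_agree {g h : ∀ n, 𝒢.G n} {S : Set ℕ} (hS : S ∈ U)
    (hagree : ∀ n ∈ S, g n = h n) :
    (QuotientGroup.mk g : 𝒢.Q U) = QuotientGroup.mk h := by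
  rw [mk_eq_iff]
  intro ε hε
  refine Filter.mem_of_superset hS ?_
  intro n hn
  have : (g n)⁻¹ * h n = 1 := by rw [hagree n hn]; group
  simp only [Set.mem_setOf_eq, this, 𝒢.norm_one n]
  exact hε

lemma mem_internal_iff (W : ∀ n, Set (𝒢.G n)) (x : 𝒢.Q U) :
    x ∈ 𝒢.internalSet U W ↔ ∃ g : ∀ n, 𝒢.G n, (∀ n, g n ∈ W n) ∧ QuotientGroup.mk g = x := by
  simp only [internalSet, Set.mem_image, Set.mem_setOf_eq]

end Statement4Aux
namespace Statement4Aux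

variable {𝒢 : PMFamily} {U : Ultrafilter ℕ}

variable (𝒢 U) in
/-- coordinatewise products of at most `N` elements of `Xn n ∪ (Xn n)⁻¹`. -/
def Z (Xn : ∀ n, Set (𝒢.G n)) (N : ℕ) (n : ℕ) : Set (𝒢.G n) :=
  ⋃ m ≤ N, (Xn n ∪ (Xn n)⁻¹) ^ m

variable {Xn : ∀ n, Set (𝒢.G n)}

lemma one_mem_Z (N n : ℕ) : (1 : 𝒢.G n) ∈ Z 𝒢 Xn N n := by
  refine Set.mem_iUnion₂.mpr ⟨0, Nat.zero_le N, ?_⟩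
  simp [pow_zero]

lemma Z_mono {N N' : ℕ} (h : N ≤ N') (n : ℕ) : Z 𝒢 Xn N n ⊆ Z 𝒢 Xn N' n := by
  intro a ha
  obtain ⟨m, hm, hma⟩ := Set.mem_iUnion₂.mp ha
  exact Set.mem_iUnion₂.mpr ⟨m, le_trans hm h, hma⟩

lemma Z_mul {N M n : ℕ} {a b : 𝒢.G n} (ha : a ∈ Z 𝒢 Xn N n) (hb : b ∈ Z 𝒢 Xn M n) :
    a * b ∈ Z 𝒢 Xn (N + M) n := by
  obtain ⟨i, hi, hia⟩ := Set.mem_iUnion₂.mp ha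
  obtain ⟨j, hj, hjb⟩ := Set.mem_iUnion₂.mp hb
  refine Set.mem_iUnion₂.mpr ⟨i + j, add_le_add hi hj, ?_⟩
  rw [pow_add]
  exact Set.mul_mem_mul hia hjb

lemma Z_inv {N n : ℕ} {a : 𝒢.G n} (ha : a ∈ Z 𝒢 Xn N n) : a⁻¹ ∈ Z 𝒢 Xn N n := by
  obtain ⟨i, hi, hia⟩ := Set.mem_iUnion₂.mp ha
  refine Set.mem_iUnion₂.mpr ⟨i, hi, ?_⟩
  have hsym : (Xn n ∪ (Xn n)⁻¹)⁻¹ = Xn n ∪ (Xn n)⁻¹ := by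
    rw [show (Xn n ∪ (Xn n)⁻¹)⁻¹ = (Xn n)⁻¹ ∪ ((Xn n)⁻¹)⁻¹ from rfl, inv_inv, Set.union_comm]
  have : a⁻¹ ∈ ((Xn n ∪ (Xn n)⁻¹) ^ i)⁻¹ := by
    rw [Set.mem_inv, inv_inv]; exact hia
  rwa [← inv_pow, hsym] at this

variable (𝒢 U) in
/-- The internal set of products of at most `N` generators. -/
def Y (Xn : ∀ n, Set (𝒢.G n)) (N : ℕ) : Set (𝒢.Q U) :=
  𝒢.internalSet U (Z 𝒢 Xn N)

lemma one_mem_Y (N : ℕ) : (1 : 𝒢.Q U) ∈ Y 𝒢 U Xn N :=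
  (mem_internal_iff 𝒢 U _ _).mpr ⟨1, fun n => one_mem_Z N n, rfl⟩

lemma Y_mono {N N' : ℕ} (h : N ≤ N') : Y 𝒢 U Xn N ⊆ Y 𝒢 U Xn N' := by
  intro x hx
  obtain ⟨g, hg, hgx⟩ := (mem_internal_iff 𝒢 U _ _).mp hx
  exact (mem_internal_iff 𝒢 U _ _).mpr ⟨g, fun n => Z_mono h n (hg n), hgx⟩

lemma Y_mul {N M : ℕ} {x y : 𝒢.Q U} (hx : x ∈ Y 𝒢 U Xn N) (hy : y ∈ Y 𝒢 U Xn M) :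
    x * y ∈ Y 𝒢 U Xn (N + M) := by
  obtain ⟨g, hg, hgx⟩ := (mem_internal_iff 𝒢 U _ _).mp hx
  obtain ⟨h, hh, hhy⟩ := (mem_internal_iff 𝒢 U _ _).mp hy
  refine (mem_internal_iff 𝒢 U _ _).mpr ⟨g * h, fun n => Z_mul (hg n) (hh n), ?_⟩
  rw [← hgx, ← hhy]; rfl

lemma Y_inv {N : ℕ} {x : 𝒢.Q U} (hx : x ∈ Y 𝒢 U Xn N) : x⁻¹ ∈ Y 𝒢 U Xn N := by
  obtain ⟨g, hg, hgx⟩ := (mem_internal_iff 𝒢 U _ _).mp hx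
  refine (mem_internal_iff 𝒢 U _ _).mpr ⟨g⁻¹, fun n => Z_inv (hg n), ?_⟩
  rw [← hgx]; rfl

end Statement4Aux
namespace Statement4Aux

open Filter Set Pointwise ENNReal PMFamily

variable {𝒢 : PMFamily} {U : Ultrafilter ℕ} {Xn : ∀ n, Set (𝒢.G n)}

lemma gencover (hgen : Subgroup.closure (𝒢.internalSet U Xn) = (⊤ : Subgroup (𝒢.Q U)))
    (x : 𝒢.Q U) : ∃ N, x ∈ Y 𝒢 U Xn N := by
  have hx : x ∈ Subgroup.closure (𝒢.internalSet U Xn) := by rw [hgen]; exact Subgroup.mem_top x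
  induction hx using Subgroup.closure_induction with
  | mem x hx =>
    obtain ⟨g, hg, hgx⟩ := (mem_internal_iff 𝒢 U _ _).mp hx
    refine ⟨1, (mem_internal_iff 𝒢 U _ _).mpr ⟨g, fun n => ?_, hgx⟩⟩
    exact Set.mem_iUnion₂.mpr ⟨1, le_refl 1, by rw [pow_one]; exact Set.mem_union_left _ (hg n)⟩
  | one => exact ⟨0, one_mem_Y 0⟩
  | mul x y hx hy ihx ihy =>
    obtain ⟨N, hN⟩ := ihx; obtain ⟨M, hM⟩ := ihy
    exact ⟨N + M, Y_mul hN hM⟩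
  | inv x hx ihx =>
    obtain ⟨N, hN⟩ := ihx
    exact ⟨N, Y_inv hN⟩

/-- Internal sets are closed: a point approximable by the internal set of `W` lies in it. -/
lemma internal_closed (hU : (U : Filter ℕ) ≤ Filter.cofinite)
    (W : ∀ n, Set (𝒢.G n)) (hne : ∀ n, (W n).Nonempty) (g : ∀ n, 𝒢.G n)
    (happ : ∀ ε : ℝ≥0∞, 0 < ε → ∃ h : ∀ n, 𝒢.G n, (∀ n, h n ∈ W n) ∧
      {n | 𝒢.ν n ((g n)⁻¹ * h n) < ε} ∈ U) :
    (QuotientGroup.mk g : 𝒢.Q U) ∈ 𝒢.internalSet U W := by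
  classical
  have hpos : ∀ k : ℕ, (0 : ℝ≥0∞) < ((k : ℝ≥0∞) + 1)⁻¹ := by
    intro k
    exact ENNReal.inv_pos.mpr (by simp)
  choose w hw hA using fun k : ℕ => happ ((k : ℝ≥0∞) + 1)⁻¹ (hpos k)
  set B : ℕ → Set ℕ := fun k =>
    (⋂ j ≤ k, {n | 𝒢.ν n ((g n)⁻¹ * w j n) < ((j : ℝ≥0∞) + 1)⁻¹}) ∩ {n | k ≤ n} with hB
  have hBU : ∀ k, B k ∈ U := by
    intro k
    refine Filter.inter_mem ?_ (hU ?_)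
    · exact (Filter.biInter_mem (Set.finite_Iic k)).mpr fun j _ => hA j
    · rw [Filter.mem_cofinite]
      have : {n : ℕ | k ≤ n}ᶜ = {n | n < k} := by ext n; simp
      rw [this]
      exact Set.finite_Iio k
  have hBsub : ∀ {j k : ℕ}, j ≤ k → B k ⊆ B j := by
    intro j k hjk n hn
    obtain ⟨h1, h2⟩ := hn
    refine ⟨?_, le_trans hjk h2⟩
    simp only [Set.mem_iInter] at h1 ⊢
    exact fun i hi => h1 i (le_trans hi hjk)
  set φ : ℕ → ℕ := fun n => Nat.findGreatest (fun k => n ∈ B k) n with hφ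
  set H : ∀ n, 𝒢.G n := fun n => if n ∈ B 0 then w (φ n) n else (hne n).some with hH
  have hHW : ∀ n, H n ∈ W n := by
    intro n
    rw [hH]
    by_cases hn : n ∈ B 0
    · simp only [if_pos hn]; exact hw _ n
    · simp only [if_neg hn]; exact (hne n).some_mem
  have hgH : (QuotientGroup.mk g : 𝒢.Q U) = QuotientGroup.mk H := by
    rw [mk_eq_iff]
    intro ε hε
    obtain ⟨k, hk⟩ : ∃ k : ℕ, ((k : ℝ≥0∞) + 1)⁻¹ < ε := by
      obtain ⟨k, hk⟩ := ENNReal.exists_inv_nat_lt hε.ne'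
      refine ⟨k, lt_of_le_of_lt ?_ hk⟩
      exact ENNReal.inv_le_inv.mpr (by simp)
    refine Filter.mem_of_superset (hBU k) ?_
    intro n hn
    have hnk : k ≤ n := hn.2
    have hφk : k ≤ φ n := Nat.le_findGreatest hnk hn
    have hnφ : n ∈ B (φ n) := Nat.findGreatest_spec (P := fun k => n ∈ B k) hnk hn
    have hn0 : n ∈ B 0 := hBsub (Nat.zero_le _) hn
    have hnA : 𝒢.ν n ((g n)⁻¹ * w (φ n) n) < (((φ n) : ℝ≥0∞) + 1)⁻¹ := by
      have := hnφ.1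
      simp only [Set.mem_iInter] at this
      exact this (φ n) (le_refl _)
    have hHn : H n = w (φ n) n := by rw [hH]; simp only [if_pos hn0]
    show 𝒢.ν n ((g n)⁻¹ * H n) < ε
    rw [hHn]
    refine lt_of_lt_of_le hnA (le_trans ?_ hk.le)
    exact ENNReal.inv_le_inv.mpr (by exact_mod_cast add_le_add_left (Nat.cast_le.mpr hφk) 1)
  exact (mem_internal_iff 𝒢 U _ _).mpr ⟨H, hHW, hgH.symm⟩

end Statement4Aux
namespace Statement4Aux

open Filter Set Pointwise ENNReal PMFamily

variable {𝒢 : PMFamily} {U : Ultrafilter ℕ} {Xn : ∀ n, Set (𝒢.G n)}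

lemma not_in_Y_sep (hU : (U : Filter ℕ) ≤ Filter.cofinite) {x : 𝒢.Q U} {N : ℕ}
    (hx : x ∉ Y 𝒢 U Xn N) :
    ∃ η : ℝ≥0∞, 0 < η ∧ η ≤ 1 ∧
      ∀ c : ∀ n, 𝒢.G n, (∀ n, 𝒢.ν n (c n) < η) → x * QuotientGroup.mk c ∉ Y 𝒢 U Xn N := by
  by_contra hcon
  push_neg at hcon
  apply hx
  obtain ⟨g, rfl⟩ := QuotientGroup.mk_surjective x
  refine internal_closed hU _ (fun n => ⟨1, one_mem_Z N n⟩) g ?_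
  intro ε hε
  set η := min ε 1 / 2 with hη
  have hηpos : 0 < η := ENNReal.div_pos (by simp [lt_min hε zero_lt_one, (lt_min hε zero_lt_one).ne']) (by norm_num)
  have hη1 : η ≤ 1 := le_trans ENNReal.half_le_self (min_le_right _ _)
  obtain ⟨c, hc, hcY⟩ := hcon η hηpos hη1
  rw [show (QuotientGroup.mk g : 𝒢.Q U) * QuotientGroup.mk c = QuotientGroup.mk (g * c) from rfl]
    at hcY
  obtain ⟨h, hhZ, hheq⟩ := (mem_internal_iff 𝒢 U _ _).mp hcY
  refine ⟨h, hhZ, ?_⟩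
  have hcrit := (mk_eq_iff 𝒢 U (g * c) h).mp hheq.symm η hηpos
  refine Filter.mem_of_superset hcrit ?_
  intro n hn
  simp only [Set.mem_setOf_eq] at hn ⊢
  have hdecomp : (g n)⁻¹ * h n = c n * (((g * c) n)⁻¹ * h n) := by
    show (g n)⁻¹ * h n = c n * ((g n * c n)⁻¹ * h n)
    group
  calc 𝒢.ν n ((g n)⁻¹ * h n) = 𝒢.ν n (c n * (((g * c) n)⁻¹ * h n)) := by rw [hdecomp]
    _ ≤ 𝒢.ν n (c n) + 𝒢.ν n (((g * c) n)⁻¹ * h n) := 𝒢.norm_mul n _ _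
    _ < η + η := ENNReal.add_lt_add (hc n) hn
    _ = min ε 1 := by rw [hη, ENNReal.add_halves]
    _ ≤ ε := min_le_left _ _

end Statement4Aux
namespace Statement4Aux

open Filter Set Pointwise ENNReal PMFamily

variable {𝒢 : PMFamily} {U : Ultrafilter ℕ} {Xn : ∀ n, Set (𝒢.G n)}

lemma Ici_mem_U (hU : (U : Filter ℕ) ≤ Filter.cofinite) (k : ℕ) : {n : ℕ | k ≤ n} ∈ U := by
  refine hU ?_
  rw [Filter.mem_cofinite]
  have : {n : ℕ | k ≤ n}ᶜ = {n | n < k} := by ext n; simp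
  rw [this]
  exact Set.finite_Iio k

lemma small_in_Y (hU : (U : Filter ℕ) ≤ Filter.cofinite)
    (hgen : Subgroup.closure (𝒢.internalSet U Xn) = (⊤ : Subgroup (𝒢.Q U))) :
    ∃ (ε : ℝ≥0∞) (M : ℕ), 0 < ε ∧
      ∀ u : ∀ n, 𝒢.G n, (∀ n, 𝒢.ν n (u n) < ε) →
        (QuotientGroup.mk u : 𝒢.Q U) ∈ Y 𝒢 U Xn M := by
  by_contra hcon
  push_neg at hcon
  -- step existence
  have step : ∀ (k : ℕ) (x : 𝒢.Q U) (ε : ℝ≥0∞), ∃ (b : ∀ n, 𝒢.G n) (ε' : ℝ≥0∞),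
      0 < ε' ∧ ε' ≤ 1 ∧ (0 < ε →
        ((∀ n, 𝒢.ν n (b n) < ε) ∧ 2 * ε' ≤ ε ∧
          ∀ c : ∀ n, 𝒢.G n, (∀ n, 𝒢.ν n (c n) < 4 * ε') →
            x * QuotientGroup.mk b * QuotientGroup.mk c ∉ Y 𝒢 U Xn k)) := by
    intro k x ε
    by_cases hε : 0 < ε
    · obtain ⟨j, hj⟩ := gencover hgen x
      obtain ⟨u, hu, huY⟩ := hcon ε (j + k) hε
      have hxb : x * QuotientGroup.mk u ∉ Y 𝒢 U Xn k := by
        intro hmem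
        apply huY
        have h2 : x⁻¹ * (x * QuotientGroup.mk u) ∈ Y 𝒢 U Xn (j + k) := Y_mul (Y_inv hj) hmem
        rwa [inv_mul_cancel_left] at h2
      obtain ⟨η, hηpos, hη1, hsep⟩ := not_in_Y_sep hU hxb
      have hm8 : min η ε / 8 ≤ min η ε := by
        rw [ENNReal.div_eq_inv_mul]
        calc (8 : ℝ≥0∞)⁻¹ * min η ε ≤ 1 * min η ε := by
              refine mul_le_mul_left ?_ _
              rw [ENNReal.inv_le_one]
              norm_num
          _ = min η ε := one_mul _
      have hminpos : 0 < min η ε := lt_min hηpos hε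
      refine ⟨u, min η ε / 8, ENNReal.div_pos hminpos.ne' (by norm_num), 
        le_trans hm8 (le_trans (min_le_left _ _) hη1), fun _ => ⟨hu, ?_, ?_⟩⟩
      · -- 2 * (min η ε / 8) ≤ ε
        calc 2 * (min η ε / 8) ≤ 8 * (min η ε / 8) := by
              refine mul_le_mul_left ?_ _; norm_num
          _ ≤ min η ε := ENNReal.mul_div_le
          _ ≤ ε := min_le_right _ _
      · intro c hc
        apply hsep
        intro n
        refine lt_of_lt_of_le (hc n) ?_
        calc 4 * (min η ε / 8) ≤ 8 * (min η ε / 8) := by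
              refine mul_le_mul_left ?_ _; norm_num
          _ ≤ min η ε := ENNReal.mul_div_le
          _ ≤ η := min_le_left _ _
    · exact ⟨1, 1, zero_lt_one, le_refl 1, fun h => absurd h hε⟩
  choose bf ef hefpos hefle hmain using step
  obtain ⟨chain, hchain0, hchainsucc⟩ :
      ∃ chain : ℕ → 𝒢.Q U × ℝ≥0∞, chain 0 = (1, 1) ∧
        ∀ k, chain (k + 1) =
          ((chain k).1 * QuotientGroup.mk (bf k (chain k).1 (chain k).2),
            ef k (chain k).1 (chain k).2) :=
    ⟨fun k => Nat.rec ((1 : 𝒢.Q U), (1 : ℝ≥0∞))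
      (fun k p => (p.1 * QuotientGroup.mk (bf k p.1 p.2), ef k p.1 p.2)) k, rfl, fun k => rfl⟩
  set xx : ℕ → 𝒢.Q U := fun k => (chain k).1 with hxx
  set ee : ℕ → ℝ≥0∞ := fun k => (chain k).2 with hee
  set bb : ℕ → ∀ n, 𝒢.G n := fun k => bf k (xx k) (ee k) with hbb
  have hxsucc : ∀ k, xx (k + 1) = xx k * QuotientGroup.mk (bb k) := by
    intro k
    show (chain (k + 1)).1 = (chain k).1 * QuotientGroup.mk (bf k (chain k).1 (chain k).2)
    rw [hchainsucc k]
  have heesucc : ∀ k, ee (k + 1) = ef k (xx k) (ee k) := by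
    intro k
    show (chain (k + 1)).2 = ef k (chain k).1 (chain k).2
    rw [hchainsucc k]
  have eepos : ∀ k, 0 < ee k := by
    intro k
    cases k with
    | zero => show (0 : ℝ≥0∞) < (chain 0).2; rw [hchain0]; exact zero_lt_one
    | succ k => rw [heesucc k]; exact hefpos _ _ _
  have eele1 : ∀ k, ee k ≤ 1 := by
    intro k
    cases k with
    | zero => show (chain 0).2 ≤ 1; rw [hchain0]
    | succ k => rw [heesucc k]; exact hefle _ _ _
  have eetop : ∀ k, ee k ≠ ⊤ := fun k => ne_top_of_le_ne_top ENNReal.one_ne_top (eele1 k)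
  have hmain' := fun k => hmain k (xx k) (ee k) (eepos k)
  have hbk : ∀ k n, 𝒢.ν n (bb k n) < ee k := fun k => ((hmain' k).1)
  have h2e : ∀ k, 2 * ee (k + 1) ≤ ee k := by
    intro k; rw [heesucc k]; exact (hmain' k).2.1
  have hexcl : ∀ k (c : ∀ n, 𝒢.G n), (∀ n, 𝒢.ν n (c n) < 4 * ee (k + 1)) →
      xx (k + 1) * QuotientGroup.mk c ∉ Y 𝒢 U Xn k := by
    intro k c hc
    rw [hxsucc k]
    refine (hmain' k).2.2 c ?_
    rwa [← heesucc k] at *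
  -- sum bound
  have eesum : ∀ (m a : ℕ), ∑ i ∈ Finset.Ico a (a + m), ee i ≤ 2 * ee a := by
    intro m
    induction m with
    | zero => intro a; simp
    | succ m ih =>
      intro a
      have h1 : a < a + (m + 1) := by omega
      rw [Finset.sum_eq_sum_Ico_succ_bot h1]
      have h2 : a + (m + 1) = (a + 1) + m := by omega
      rw [h2]
      calc ee a + ∑ i ∈ Finset.Ico (a + 1) ((a + 1) + m), ee i
          ≤ ee a + 2 * ee (a + 1) := add_le_add_right (ih (a + 1)) _
        _ ≤ ee a + ee a := add_le_add_right (h2e a) _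
        _ = 2 * ee a := (two_mul _).symm
  -- reps
  obtain ⟨g, hg0, hgsucc⟩ : ∃ g : ℕ → ∀ n, 𝒢.G n, g 0 = 1 ∧ ∀ k, g (k + 1) = g k * bb k :=
    ⟨fun k => Nat.rec (1 : ∀ n, 𝒢.G n) (fun k gk => gk * bb k) k, rfl, fun k => rfl⟩
  have hmkg : ∀ k, (QuotientGroup.mk (g k) : 𝒢.Q U) = xx k := by
    intro k
    induction k with
    | zero =>
      show (QuotientGroup.mk (g 0) : 𝒢.Q U) = (chain 0).1
      rw [hg0, hchain0]
      rfl
    | succ k ih => rw [hgsucc k, show (QuotientGroup.mk (g k * bb k) : 𝒢.Q U) =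
        QuotientGroup.mk (g k) * QuotientGroup.mk (bb k) from rfl, ih, ← hxsucc k]
  set gstar : ∀ n, 𝒢.G n := fun n => g n n with hgstar
  have hnotY : ∀ k, (QuotientGroup.mk gstar : 𝒢.Q U) ∉ Y 𝒢 U Xn k := by
    intro k
    set c : ∀ n, 𝒢.G n := fun n => if n < k + 1 then 1 else (g (k + 1) n)⁻¹ * g n n with hc
    have Dbound : ∀ m, k + 1 ≤ m → ∀ n,
        𝒢.ν n ((g (k + 1) n)⁻¹ * g m n) ≤ ∑ i ∈ Finset.Ico (k + 1) m, ee i := by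
      intro m hm
      induction m, hm using Nat.le_induction with
      | base =>
        intro n
        simp [𝒢.norm_one n]
      | succ m hm ih =>
        intro n
        rw [hgsucc m]
        have hassoc : (g (k + 1) n)⁻¹ * (g m * bb m) n
            = ((g (k + 1) n)⁻¹ * g m n) * bb m n := by
          show (g (k + 1) n)⁻¹ * (g m n * bb m n) = _
          rw [mul_assoc]
        rw [hassoc, Finset.sum_Ico_succ_top hm]
        exact le_trans (𝒢.norm_mul n _ _) (add_le_add (ih n) (hbk m n).le)
    have hcsmall : ∀ n, 𝒢.ν n (c n) < 4 * ee (k + 1) := by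
      intro n
      have hpos4 : (0 : ℝ≥0∞) < 4 * ee (k + 1) :=
        ENNReal.mul_pos (by norm_num) (eepos (k + 1)).ne'
      by_cases hn : n < k + 1
      · have hcn : c n = 1 := by simp only [hc]; rw [if_pos hn]
        rw [hcn, 𝒢.norm_one n]
        exact hpos4
      · push_neg at hn
        have hcn : c n = (g (k + 1) n)⁻¹ * g n n := by
          simp only [hc]; rw [if_neg (not_lt.mpr hn)]
        rw [hcn]
        have hD := Dbound n hn n
        have hsum : ∑ i ∈ Finset.Ico (k + 1) n, ee i ≤ 2 * ee (k + 1) := by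
          have : n = (k + 1) + (n - (k + 1)) := by omega
          rw [this]
          exact eesum _ _
        refine lt_of_le_of_lt (le_trans hD hsum) ?_
        rw [ENNReal.mul_lt_mul_iff_left (eepos (k + 1)).ne' (eetop (k + 1))]
        norm_num
    have heq : (QuotientGroup.mk gstar : 𝒢.Q U) = xx (k + 1) * QuotientGroup.mk c := by
      rw [← hmkg (k + 1),
        show (QuotientGroup.mk (g (k + 1)) : 𝒢.Q U) * QuotientGroup.mk c =
          QuotientGroup.mk (g (k + 1) * c) from rfl]
      refine mk_eq_of_agree 𝒢 U (Ici_mem_U hU (k + 1)) ?_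
      intro n hn
      have hn' : ¬ (n < k + 1) := not_lt.mpr hn
      show g n n = g (k + 1) n * c n
      have hcn : c n = (g (k + 1) n)⁻¹ * g n n := by
        simp only [hc]
        rw [if_neg hn']
      rw [hcn, mul_inv_cancel_left]
    rw [heq]
    exact hexcl k c hcsmall
  obtain ⟨N, hN⟩ := gencover hgen (QuotientGroup.mk gstar)
  exact hnotY N hN

end Statement4Aux
namespace Statement4Aux

open Filter Set Pointwise ENNReal PMFamily

variable {𝒢 : PMFamily} {U : Ultrafilter ℕ} {Xn : ∀ n, Set (𝒢.G n)}

lemma dense_Z (hU : (U : Filter ℕ) ≤ Filter.cofinite)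
    (hgen : Subgroup.closure (𝒢.internalSet U Xn) = (⊤ : Subgroup (𝒢.Q U)))
    (ε : ℝ≥0∞) (hε : 0 < ε) :
    ∃ N, {n | ∀ g : 𝒢.G n, ∃ h ∈ Z 𝒢 Xn N n, 𝒢.ν n (g * h⁻¹) < ε} ∈ U := by
  classical
  by_contra hcon
  push_neg at hcon
  have hC : ∀ N, {n | ∃ g : 𝒢.G n, ∀ h ∈ Z 𝒢 Xn N n, ε ≤ 𝒢.ν n (g * h⁻¹)} ∈ U := by
    intro N
    have h1 := Ultrafilter.compl_mem_iff_notMem.mpr (hcon N)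
    have h2 : {n | ∀ g : 𝒢.G n, ∃ h ∈ Z 𝒢 Xn N n, 𝒢.ν n (g * h⁻¹) < ε}ᶜ =
        {n | ∃ g : 𝒢.G n, ∀ h ∈ Z 𝒢 Xn N n, ε ≤ 𝒢.ν n (g * h⁻¹)} := by
      ext n
      simp only [Set.mem_compl_iff, Set.mem_setOf_eq]
      push_neg
      rfl
    rwa [h2] at h1
  have hwit : ∀ (N n : ℕ), ∃ g : 𝒢.G n,
      n ∈ {n | ∃ g : 𝒢.G n, ∀ h ∈ Z 𝒢 Xn N n, ε ≤ 𝒢.ν n (g * h⁻¹)} →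
        ∀ h ∈ Z 𝒢 Xn N n, ε ≤ 𝒢.ν n (g * h⁻¹) := by
    intro N n
    by_cases hn : n ∈ {n | ∃ g : 𝒢.G n, ∀ h ∈ Z 𝒢 Xn N n, ε ≤ 𝒢.ν n (g * h⁻¹)}
    · obtain ⟨g, hg⟩ := hn
      exact ⟨g, fun _ => hg⟩
    · exact ⟨1, fun h => absurd h hn⟩
  choose w hw using hwit
  set B : ℕ → Set ℕ := fun N =>
    (⋂ j ≤ N, {n | ∃ g : 𝒢.G n, ∀ h ∈ Z 𝒢 Xn j n, ε ≤ 𝒢.ν n (g * h⁻¹)}) ∩ {n | N ≤ n} with hB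
  have hBU : ∀ N, B N ∈ U := by
    intro N
    exact Filter.inter_mem ((Filter.biInter_mem (Set.finite_Iic N)).mpr fun j _ => hC j)
      (Ici_mem_U hU N)
  set φ : ℕ → ℕ := fun n => Nat.findGreatest (fun k => n ∈ B k) n with hφ
  set gst : ∀ n, 𝒢.G n := fun n => w (φ n) n with hgst
  obtain ⟨N, hN⟩ := gencover hgen (QuotientGroup.mk gst)
  obtain ⟨h, hhZ, hheq⟩ := (mem_internal_iff 𝒢 U _ _).mp hN
  have hT : {n | 𝒢.ν n ((h n)⁻¹ * gst n) < ε} ∈ U := (mk_eq_iff 𝒢 U h gst).mp hheq ε hε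
  obtain ⟨n, hnT, hnB⟩ := Filter.nonempty_of_mem (Filter.inter_mem hT (hBU N))
  have hnN : N ≤ n := hnB.2
  have hφN : N ≤ φ n := Nat.le_findGreatest hnN hnB
  have hnφ : n ∈ B (φ n) := Nat.findGreatest_spec (P := fun k => n ∈ B k) hnN hnB
  have hnC : n ∈ {m | ∃ g : 𝒢.G m, ∀ h' ∈ Z 𝒢 Xn (φ n) m, ε ≤ 𝒢.ν m (g * h'⁻¹)} := by
    have := hnφ.1
    simp only [Set.mem_iInter] at this
    exact this (φ n) (le_refl _)
  have hkey : ε ≤ 𝒢.ν n (gst n * (h n)⁻¹) :=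
    hw (φ n) n hnC (h n) (Z_mono hφN n (hhZ n))
  have hlt : 𝒢.ν n ((h n)⁻¹ * gst n) < ε := hnT
  rw [nu_mul_comm 𝒢 n ((h n)⁻¹) (gst n)] at hlt
  exact absurd hlt (not_lt.mpr hkey)

end Statement4Aux
namespace Statement4Aux

open Filter Set Pointwise ENNReal PMFamily

variable {𝒢 : PMFamily} {U : Ultrafilter ℕ} {Xn : ∀ n, Set (𝒢.G n)}

lemma adjust (a : ∀ n, 𝒢.G n) (ha : ∀ n, a n ∈ Xn n) (v : ∀ n, 𝒢.G n)
    (hv : ∀ n, v n ∈ Xn n ∪ (Xn n)⁻¹) :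
    ∃ v' : ∀ n, 𝒢.G n,
      ((QuotientGroup.mk v' : 𝒢.Q U) ∈ 𝒢.internalSet U Xn ∪ (𝒢.internalSet U Xn)⁻¹) ∧
      (QuotientGroup.mk v' : 𝒢.Q U) = QuotientGroup.mk v := by
  classical
  rcases Ultrafilter.mem_or_compl_mem U {n | v n ∈ Xn n} with hT | hT
  · refine ⟨fun n => if v n ∈ Xn n then v n else a n, ?_, ?_⟩
    · refine Set.mem_union_left _ ((mem_internal_iff 𝒢 U _ _).mpr
        ⟨_, fun n => ?_, rfl⟩)
      by_cases hn : v n ∈ Xn n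
      · simp only [if_pos hn]; exact hn
      · simp only [if_neg hn]; exact ha n
    · refine mk_eq_of_agree 𝒢 U hT ?_
      intro n hn
      show (if v n ∈ Xn n then v n else a n) = v n
      exact if_pos hn
  · refine ⟨fun n => if v n ∈ (Xn n)⁻¹ then v n else (a n)⁻¹, ?_, ?_⟩
    · refine Set.mem_union_right _ ?_
      rw [Set.mem_inv]
      refine (mem_internal_iff 𝒢 U _ _).mpr ⟨_, fun n => ?_, rfl⟩
      show (if v n ∈ (Xn n)⁻¹ then v n else (a n)⁻¹)⁻¹ ∈ Xn n
      by_cases hn : v n ∈ (Xn n)⁻¹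
      · rw [if_pos hn]
        exact Set.mem_inv.mp hn
      · rw [if_neg hn, inv_inv]; exact ha n
    · refine mk_eq_of_agree 𝒢 U hT ?_
      intro n hn
      have hvn : v n ∈ (Xn n)⁻¹ := (hv n).resolve_left hn
      show (if v n ∈ (Xn n)⁻¹ then v n else (a n)⁻¹) = v n
      exact if_pos hvn
  
lemma Y_subset_pows (a : ∀ n, 𝒢.G n) (ha : ∀ n, a n ∈ Xn n) (N : ℕ) :
    Y 𝒢 U Xn N ⊆ ⋃ m ≤ N, ((𝒢.internalSet U Xn) ∪ (𝒢.internalSet U Xn)⁻¹) ^ m := by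
  classical
  intro x hx
  obtain ⟨h, hhZ, rfl⟩ := (mem_internal_iff 𝒢 U _ _).mp hx
  choose m hmle hmem using fun n => Set.mem_iUnion₂.mp (hhZ n)
  have hmap : {k | k ≤ N} ∈ Ultrafilter.map m U := by
    rw [Ultrafilter.mem_map]
    have : m ⁻¹' {k | k ≤ N} = Set.univ := by
      ext n; simp [hmle n]
    rw [this]; exact Filter.univ_mem
  obtain ⟨m₀, hm₀le, hpure⟩ := Ultrafilter.eq_pure_of_finite_mem (Set.finite_Iic N) hmap
  have hS : {n | m n = m₀} ∈ U := by
    have h1 : {m₀} ∈ Ultrafilter.map m U := by rw [hpure]; rfl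
    rw [Ultrafilter.mem_map] at h1
    have : m ⁻¹' {m₀} = {n | m n = m₀} := by ext n; simp
    rwa [this] at h1
  have hfac : ∀ n, ∃ F : Fin m₀ → 𝒢.G n, (∀ i, F i ∈ Xn n ∪ (Xn n)⁻¹) ∧
      (m n = m₀ → (List.ofFn F).prod = h n) := by
    intro n
    by_cases hn : m n = m₀
    · have hp : h n ∈ (Xn n ∪ (Xn n)⁻¹) ^ m₀ := by rw [← hn]; exact hmem n
      obtain ⟨f, hf⟩ := Set.mem_pow.mp hp
      exact ⟨fun i => (f i : 𝒢.G n), fun i => (f i).2, fun _ => hf⟩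
    · exact ⟨fun _ => a n, fun _ => Set.mem_union_left _ (ha n), fun hc => absurd hc hn⟩
  choose F hFmem hFprod using hfac
  set w : Fin m₀ → ∀ n, 𝒢.G n := fun i n => F n i with hw
  choose v' hv'mem hv'eq using fun i : Fin m₀ =>
    adjust a ha (w i) (fun n => hFmem n i)
  refine Set.mem_iUnion₂.mpr ⟨m₀, hm₀le, ?_⟩
  rw [Set.mem_pow]
  refine ⟨fun i => ⟨QuotientGroup.mk (v' i), hv'mem i⟩, ?_⟩
  have hstep1 : (List.ofFn fun i => ((⟨QuotientGroup.mk (v' i), hv'mem i⟩ :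
      ↥((𝒢.internalSet U Xn) ∪ (𝒢.internalSet U Xn)⁻¹)) : 𝒢.Q U)) =
      List.ofFn fun i => (QuotientGroup.mk (w i) : 𝒢.Q U) := by
    congr 1
    funext i
    exact hv'eq i
  rw [hstep1]
  have hstep2 : (List.ofFn fun i => (QuotientGroup.mk (w i) : 𝒢.Q U)) =
      (List.ofFn w).map (QuotientGroup.mk' (𝒢.E U)) := by
    rw [List.map_ofFn]
    rfl
  rw [hstep2, ← map_list_prod (QuotientGroup.mk' (𝒢.E U))]
  show (QuotientGroup.mk ((List.ofFn w).prod) : 𝒢.Q U) = QuotientGroup.mk h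
  refine mk_eq_of_agree 𝒢 U hS ?_
  intro n hn
  rw [Pi.list_prod_apply n (List.ofFn w), List.map_ofFn]
  have : (fun f : ∀ n, 𝒢.G n => f n) ∘ w = F n := by funext i; rfl
  rw [this]
  exact hFprod n hn

end Statement4Aux



/-- bounded generation, bounded case. If the norms are uniformly bounded,
`X` is a metrically internal subset of the metric ultraproduct, and `X` generates the metric
ultraproduct as a group, then `X` generates in finitely many steps: there is `N` such that
every element is a product of at most `N` elements of `X ∪ X⁻¹`. -/
theorem statement4 (𝒢 : PMFamily)
    (hmetric : ∀ n (g : 𝒢.G n), 𝒢.ν n g = 0 ↔ g = 1)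
    (U : Ultrafilter ℕ) (hU : (U : Filter ℕ) ≤ Filter.cofinite)
    (hbdd : ∃ C : ℝ≥0∞, C ≠ ⊤ ∧ ∀ n (g : 𝒢.G n), 𝒢.ν n g ≤ C)
    (Xn : ∀ n, Set (𝒢.G n)) (X : Set (𝒢.Q U)) (hX : X = 𝒢.internalSet U Xn)
    (hgen : Subgroup.closure X = (⊤ : Subgroup (𝒢.Q U))) :
    ∃ N : ℕ, (⋃ m ≤ N, (X ∪ X⁻¹) ^ m) = Set.univ := by
  classical
  subst hX
  rcases Set.eq_empty_or_nonempty (𝒢.internalSet U Xn) with hXe | hXne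
  · rw [hXe, Subgroup.closure_empty] at hgen
    refine ⟨0, ?_⟩
    rw [Set.eq_univ_iff_forall]
    intro x
    have hx1 : x = 1 := by
      have hx : x ∈ (⊥ : Subgroup (𝒢.Q U)) := by rw [hgen]; exact Subgroup.mem_top x
      exact Subgroup.mem_bot.mp hx
    refine Set.mem_iUnion₂.mpr ⟨0, le_refl 0, ?_⟩
    rw [pow_zero, hx1]
    exact Set.mem_one.mpr rfl
  · obtain ⟨x0, hx0⟩ := hXne
    obtain ⟨a, ha, -⟩ := (Statement4Aux.mem_internal_iff 𝒢 U Xn x0).mp hx0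
    obtain ⟨ε, M, hεpos, hball⟩ := Statement4Aux.small_in_Y hU hgen
    obtain ⟨N, hA⟩ := Statement4Aux.dense_Z hU hgen ε hεpos
    refine ⟨M + N, ?_⟩
    rw [Set.eq_univ_iff_forall]
    intro x
    have hxY : x ∈ Statement4Aux.Y 𝒢 U Xn (M + N) := by
      obtain ⟨g, rfl⟩ := QuotientGroup.mk_surjective x
      have hch : ∀ n, ∃ hh : 𝒢.G n, hh ∈ Statement4Aux.Z 𝒢 Xn N n ∧
          (n ∈ {n | ∀ g : 𝒢.G n, ∃ h ∈ Statement4Aux.Z 𝒢 Xn N n, 𝒢.ν n (g * h⁻¹) < ε} →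
            𝒢.ν n (g n * hh⁻¹) < ε) := by
        intro n
        by_cases hn : n ∈ {n | ∀ g : 𝒢.G n, ∃ h ∈ Statement4Aux.Z 𝒢 Xn N n,
            𝒢.ν n (g * h⁻¹) < ε}
        · obtain ⟨hh, h1, h2⟩ := hn (g n)
          exact ⟨hh, h1, fun _ => h2⟩
        · exact ⟨1, Statement4Aux.one_mem_Z N n, fun h => absurd h hn⟩
      choose hh hhZ hhnu using hch
      have hus : ∀ n, 𝒢.ν n ((fun n => if n ∈ {n | ∀ g : 𝒢.G n,
          ∃ h ∈ Statement4Aux.Z 𝒢 Xn N n, 𝒢.ν n (g * h⁻¹) < ε} then g n * (hh n)⁻¹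
            else 1) n) < ε := by
        intro n
        by_cases hn : n ∈ {n | ∀ g : 𝒢.G n, ∃ h ∈ Statement4Aux.Z 𝒢 Xn N n,
            𝒢.ν n (g * h⁻¹) < ε}
        · show 𝒢.ν n (if _ then g n * (hh n)⁻¹ else 1) < ε
          rw [if_pos hn]
          exact hhnu n hn
        · show 𝒢.ν n (if _ then g n * (hh n)⁻¹ else 1) < ε
          rw [if_neg hn, 𝒢.norm_one n]
          exact hεpos
      have huY := hball _ hus
      have hhY : (QuotientGroup.mk hh : 𝒢.Q U) ∈ Statement4Aux.Y 𝒢 U Xn N :=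
        (Statement4Aux.mem_internal_iff 𝒢 U _ _).mpr ⟨hh, hhZ, rfl⟩
      have hgsplit : (QuotientGroup.mk g : 𝒢.Q U) =
          QuotientGroup.mk (fun n => if n ∈ {n | ∀ g : 𝒢.G n,
            ∃ h ∈ Statement4Aux.Z 𝒢 Xn N n, 𝒢.ν n (g * h⁻¹) < ε} then g n * (hh n)⁻¹
              else 1) * QuotientGroup.mk hh := by
        rw [show (QuotientGroup.mk (fun n => if n ∈ {n | ∀ g : 𝒢.G n,
            ∃ h ∈ Statement4Aux.Z 𝒢 Xn N n, 𝒢.ν n (g * h⁻¹) < ε} then g n * (hh n)⁻¹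
              else 1) : 𝒢.Q U) * QuotientGroup.mk hh =
            QuotientGroup.mk ((fun n => if n ∈ {n | ∀ g : 𝒢.G n,
              ∃ h ∈ Statement4Aux.Z 𝒢 Xn N n, 𝒢.ν n (g * h⁻¹) < ε} then g n * (hh n)⁻¹
                else 1) * hh) from rfl]
        refine Statement4Aux.mk_eq_of_agree 𝒢 U hA ?_
        intro n hn
        show g n = (if _ then g n * (hh n)⁻¹ else 1) * hh n
        rw [if_pos hn, inv_mul_cancel_right]
      rw [hgsplit]
      exact Statement4Aux.Y_mul huY hhY
    exact Statement4Aux.Y_subset_pows a ha (M + N) hxY
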